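/- Let D ⊆ ℂ be a domain and k ∈ ℤ, and set w_k(z) = (1+|z|²)^{-(k+2)}. Let p, q be complex polynomials with q(z) ≠ 0 for all z ∈ D, set f = p/q on D, and suppose ∫_D |f|² w_k dλ < ∞ but there is no polynomial P with deg P ≤ k and p = P·q. Then the complement ℂ \ D has positive Lebesgue measure. -/

import Mathlib

open MeasureTheory

open Metric Polynomial
open scoped ENNReal NNReal

/-- The Fubini–Study weight of level `k`: `w_k(z) = (1+|z|²)^(-(k+2))`. -/
noncomputable def fsWeight (k : ℤ) (z : ℂ) : ℝ :=
  (1 + ‖z‖ ^ 2) ^ (-(k + 2))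

/-- volume of an annulus in ℂ -/
lemma volume_annulus (z0 : ℂ) {a b : ℝ} (h0 : 0 ≤ a) (hab : a < b) :
    volume (ball z0 b \ closedBall z0 a) = ENNReal.ofReal (Real.pi * (b^2 - a^2)) := by
  rw [measure_diff (closedBall_subset_ball hab) measurableSet_closedBall.nullMeasurableSet
    (measure_closedBall_lt_top).ne]
  rw [Complex.volume_ball, Complex.volume_closedBall]
  have hb : 0 ≤ b := le_of_lt (lt_of_le_of_lt h0 hab)
  rw [← ENNReal.ofReal_pow hb, ← ENNReal.ofReal_pow h0]
  rw [← ENNReal.ofReal_coe_nnreal, NNReal.coe_real_pi]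
  rw [← ENNReal.ofReal_mul (by positivity), ← ENNReal.ofReal_mul (by positivity)]
  rw [← ENNReal.ofReal_sub _ (by positivity)]
  ring_nf

/-- key divergence lemma via disjoint annuli -/
lemma lintegral_annuli_top (h : ℂ → ℝ≥0∞) (z0 : ℂ) {K : ℝ} (hK : 0 < K)
    (a : ℕ → ℝ) (ha : ∀ n, 0 < a n)
    (hsep : ∀ m n, m < n → 2 * a m ≤ a n ∨ 2 * a n ≤ a m)
    (hb : ∀ n, ∀ z ∈ ball z0 (2 * a n) \ closedBall z0 (a n),
      ENNReal.ofReal (K / (2 * a n) ^ 2) ≤ h z) :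
    ∫⁻ z, h z = ⊤ := by
  set A : ℕ → Set ℂ := fun n => ball z0 (2 * a n) \ closedBall z0 (a n) with hA
  have hm : ∀ n, MeasurableSet (A n) := fun n =>
    measurableSet_ball.diff measurableSet_closedBall
  have hd : Pairwise (Function.onFun Disjoint A) := by
    intro m n hmn
    rw [Function.onFun, Set.disjoint_left]
    rintro z ⟨hz1m, hz2m⟩ ⟨hz1n, hz2n⟩
    rw [mem_ball] at hz1m hz1n
    rw [mem_closedBall, not_le] at hz2m hz2n
    rcases lt_or_gt_of_ne hmn with hlt | hlt
    · rcases hsep m n hlt with hc | hc <;> linarith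
    · rcases hsep n m hlt with hc | hc <;> linarith
  have hvol : ∀ n, volume (A n) = ENNReal.ofReal (Real.pi * ((2 * a n)^2 - (a n)^2)) := by
    intro n
    exact volume_annulus z0 (le_of_lt (ha n)) (by nlinarith [ha n])
  have hlow : ∀ n, ENNReal.ofReal (K * Real.pi * (3/4)) ≤ ∫⁻ z in A n, h z := by
    intro n
    calc ENNReal.ofReal (K * Real.pi * (3/4))
        = ENNReal.ofReal (K / (2 * a n) ^ 2) * volume (A n) := by
          rw [hvol n, ← ENNReal.ofReal_mul (by positivity)]
          congr 1
          have := ha n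
          field_simp
          ring
      _ = ∫⁻ _ in A n, ENNReal.ofReal (K / (2 * a n) ^ 2) := (setLIntegral_const _ _).symm
      _ ≤ ∫⁻ z in A n, h z := setLIntegral_mono' (hm n) (hb n)
  have hunion : ∫⁻ z in ⋃ n, A n, h z = ∑' n, ∫⁻ z in A n, h z := lintegral_iUnion hm hd h
  have htop : (⊤ : ℝ≥0∞) ≤ ∫⁻ z, h z := by
    calc (⊤ : ℝ≥0∞) = ∑' _ : ℕ, ENNReal.ofReal (K * Real.pi * (3/4)) :=
          (ENNReal.tsum_const_eq_top_of_ne_zero (by positivity)).symm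
      _ ≤ ∑' n, ∫⁻ z in A n, h z := ENNReal.tsum_le_tsum hlow
      _ = ∫⁻ z in ⋃ n, A n, h z := hunion.symm
      _ ≤ ∫⁻ z, h z := setLIntegral_le_lintegral _ _
  exact top_le_iff.mp htop

lemma zpow_lower_aux {t T : ℝ} (ht : 1 ≤ t) (htT : t ≤ T) (e : ℤ) :
    T ^ (-|e|) ≤ t ^ e := by
  have ht0 : (0:ℝ) < t := lt_of_lt_of_le one_pos ht
  have hT : (1:ℝ) ≤ T := le_trans ht htT
  have hT0 : (0:ℝ) < T := lt_of_lt_of_le one_pos hT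
  rcases le_or_gt 0 e with he | he
  · have h1 : T ^ (-|e|) ≤ 1 := by
      rw [abs_of_nonneg he]
      calc T ^ (-e) ≤ T ^ (0:ℤ) := zpow_le_zpow_right₀ hT (by omega)
        _ = 1 := zpow_zero T
    have h2 : (1:ℝ) ≤ t ^ e := one_le_zpow₀ ht he
    linarith
  · rw [abs_of_neg he, neg_neg]
    obtain ⟨n, rfl⟩ : ∃ n : ℕ, e = -(n : ℤ) :=
      ⟨e.natAbs, by omega⟩
    rw [zpow_neg, zpow_neg, zpow_natCast, zpow_natCast]
    exact inv_anti₀ (pow_pos ht0 n) (pow_le_pow_left₀ (le_of_lt ht0) htT n)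

lemma fsWeight_pos (k : ℤ) (z : ℂ) : 0 < fsWeight k z := by
  have : (0:ℝ) < 1 + ‖z‖ ^ 2 := by positivity
  exact zpow_pos this _

lemma fsWeight_lower (k : ℤ) (M : ℝ) :
    ∃ w0 > 0, ∀ z : ℂ, ‖z‖ ≤ M → w0 ≤ fsWeight k z := by
  have hM2 : (1:ℝ) ≤ 1 + M^2 := by nlinarith
  refine ⟨(1 + M^2) ^ (-|k+2|), zpow_pos (show (0:ℝ) < 1 + M^2 by nlinarith [sq_nonneg M]) _,
    fun z hz => ?_⟩
  have h1 : (1:ℝ) ≤ 1 + ‖z‖ ^ 2 := by nlinarith [sq_nonneg (‖z‖)]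
  have h2 : 1 + ‖z‖ ^ 2 ≤ 1 + M^2 := by
    have := norm_nonneg z
    nlinarith
  have := zpow_lower_aux h1 h2 (-(k+2))
  rwa [abs_neg] at this

/-- growth of polynomial -/
lemma poly_lower (P : Polynomial ℂ) (hP : P ≠ 0) :
    ∃ c > 0, ∃ R, 1 ≤ R ∧ ∀ z : ℂ, R ≤ ‖z‖ →
      c * ‖z‖ ^ P.natDegree ≤ ‖P.eval z‖ := by
  classical
  set d := P.natDegree with hd
  set l := ‖P.coeff d‖ with hl
  have hl0 : 0 < l :=
    norm_pos_iff.mpr (by rw [← Polynomial.leadingCoeff]; exact Polynomial.leadingCoeff_ne_zero.mpr hP)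
  set S := ∑ i ∈ Finset.range d, ‖P.coeff i‖ with hS
  have hS0 : 0 ≤ S := Finset.sum_nonneg fun i _ => norm_nonneg _
  refine ⟨l/2, by positivity, max 1 (2*S/l), le_max_left _ _, fun z hz => ?_⟩
  set X := ‖z‖ with hX
  have hX1 : (1:ℝ) ≤ X := le_trans (le_max_left _ _) hz
  have hX0 : (0:ℝ) < X := lt_of_lt_of_le one_pos hX1
  have hXS : 2*S/l ≤ X := le_trans (le_max_right _ _) hz
  have heval : P.eval z = (∑ i ∈ Finset.range d, P.coeff i * z ^ i) + P.coeff d * z ^ d := by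
    rw [Polynomial.eval_eq_sum_range, Finset.sum_range_succ]
  -- tail bound
  have htail : ‖∑ i ∈ Finset.range d, P.coeff i * z ^ i‖ ≤ S * X ^ (d-1) := by
    calc ‖∑ i ∈ Finset.range d, P.coeff i * z ^ i‖
        ≤ ∑ i ∈ Finset.range d, ‖P.coeff i * z ^ i‖ :=
          norm_sum_le _ _
      _ ≤ ∑ i ∈ Finset.range d, ‖P.coeff i‖ * X ^ (d-1) := by
          apply Finset.sum_le_sum
          intro i hi
          rw [norm_mul, norm_pow]
          have : X ^ i ≤ X ^ (d-1) :=
            pow_le_pow_right₀ hX1 (Nat.le_sub_one_of_lt (Finset.mem_range.mp hi))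
          exact mul_le_mul_of_nonneg_left this (norm_nonneg _)
      _ = S * X ^ (d-1) := by rw [← Finset.sum_mul]
  have hSbd : S * X ^ (d-1) ≤ l/2 * X ^ d := by
    rcases Nat.eq_zero_or_pos d with h0 | hpos
    · have : S = 0 := by rw [hS, h0]; simp
      rw [this]
      have := pow_pos hX0 d
      nlinarith
    · have hXd : X ^ d = X ^ (d-1) * X := by
        conv_lhs => rw [show d = d - 1 + 1 by omega]
        rw [pow_succ]
      have hSl : S ≤ l/2 * X := by
        have : l/2 * (2*S/l) = S := by field_simp
        calc S = l/2 * (2*S/l) := this.symm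
          _ ≤ l/2 * X := by
            apply mul_le_mul_of_nonneg_left hXS (by positivity)
      calc S * X ^ (d-1) ≤ (l/2 * X) * X ^ (d-1) :=
            mul_le_mul_of_nonneg_right hSl (by positivity)
        _ = l/2 * X ^ d := by rw [hXd]; ring
  have hlead : ‖P.coeff d * z ^ d‖ = l * X ^ d := by
    rw [norm_mul, norm_pow]
  have hmain : l * X ^ d - S * X^(d-1) ≤ ‖P.eval z‖ := by
    have h1 : ‖P.coeff d * z ^ d‖ ≤
        ‖P.eval z‖ + ‖∑ i ∈ Finset.range d, P.coeff i * z ^ i‖ := by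
      calc ‖P.coeff d * z ^ d‖
          = ‖P.eval z + -(∑ i ∈ Finset.range d, P.coeff i * z ^ i)‖ := by
            congr 1
            rw [heval]; ring
        _ ≤ ‖P.eval z‖ + ‖-(∑ i ∈ Finset.range d, P.coeff i * z ^ i)‖ :=
            norm_add_le _ _
        _ = ‖P.eval z‖ + ‖∑ i ∈ Finset.range d, P.coeff i * z ^ i‖ := by
            rw [norm_neg]
    rw [hlead] at h1
    linarith
  linarith

/-- divergence at infinity for a polynomial of too-high degree -/
lemma lintegral_poly_top (P : Polynomial ℂ) (hP : P ≠ 0) (k : ℤ)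
    (hdeg : k + 1 ≤ (P.natDegree : ℤ)) :
    ∫⁻ z : ℂ, ENNReal.ofReal (‖P.eval z‖ ^ 2 * fsWeight k z) = ⊤ := by
  obtain ⟨c, hc, R, hR1, hgrow⟩ := poly_lower P hP
  set d := P.natDegree with hd
  set K : ℝ := c ^ 2 / 2 ^ (d + 1) with hK
  have hKpos : 0 < K := by positivity
  apply lintegral_annuli_top _ (0 : ℂ) hKpos (fun n => R * 2 ^ n)
    (fun n => by positivity)
  · intro m n hmn
    left
    have h2 : (2:ℝ) ^ (m+1) ≤ 2 ^ n := pow_le_pow_right₀ one_le_two hmn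
    calc 2 * (R * 2 ^ m) = R * 2 ^ (m+1) := by ring
      _ ≤ R * 2 ^ n := by nlinarith
  · intro n z hz
    obtain ⟨hz1, hz2⟩ := hz
    rw [mem_ball, Complex.dist_eq, sub_zero] at hz1
    rw [mem_closedBall, Complex.dist_eq, sub_zero, not_le] at hz2
    set X := ‖z‖ with hX
    set a : ℝ := R * 2 ^ n with ha
    have hapos : (0:ℝ) < a := by positivity
    have hRX : R ≤ X := by
      have : R ≤ a := by
        have : (1:ℝ) ≤ 2 ^ n := one_le_pow₀ one_le_two
        nlinarith
      linarith
    have hX1 : (1:ℝ) ≤ X := le_trans hR1 hRX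
    have hX0 : (0:ℝ) < X := lt_of_lt_of_le one_pos hX1
    apply ENNReal.ofReal_le_ofReal
    -- step 1: polynomial growth
    have h1 : (c * X ^ d) ^ 2 ≤ ‖P.eval z‖ ^ 2 :=
      pow_le_pow_left₀ (by positivity) (hgrow z hRX) 2
    -- step 2: weight bounds
    have hw1 : (1 + X ^ 2) ^ (-((d:ℤ) + 1)) ≤ fsWeight k z := by
      rw [fsWeight, ← hX]
      apply zpow_le_zpow_right₀ (by nlinarith)
      omega
    have hw2 : (1 + X ^ 2) ^ (-((d:ℤ) + 1)) = ((1 + X ^ 2) ^ (d + 1) : ℝ)⁻¹ := by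
      rw [show -((d:ℤ)+1) = -((d+1 : ℕ) : ℤ) by push_cast; ring, zpow_neg, zpow_natCast]
    have hw3 : ((2 * X ^ 2) ^ (d + 1) : ℝ)⁻¹ ≤ ((1 + X ^ 2) ^ (d + 1) : ℝ)⁻¹ := by
      apply inv_anti₀ (by positivity)
      apply pow_le_pow_left₀ (by positivity)
      nlinarith
    have hwfin : ((2 * X ^ 2) ^ (d + 1) : ℝ)⁻¹ ≤ fsWeight k z := by
      rw [← hw2] at hw3
      linarith
    -- step 3: algebraic identity
    have hid : (c * X ^ d) ^ 2 * ((2 * X ^ 2) ^ (d + 1) : ℝ)⁻¹ = K / X ^ 2 := by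
      have e1 : (2 * X ^ 2 : ℝ) ^ (d + 1) = 2 ^ (d+1) * (X ^ (2*d) * X ^ 2) := by
        rw [mul_pow, ← pow_mul, show 2*(d+1) = 2*d + 2 from by omega, pow_add]
        ring
      have e2 : (c * X ^ d : ℝ) ^ 2 = c ^ 2 * X ^ (2*d) := by
        rw [mul_pow, ← pow_mul, show d*2 = 2*d from by omega]
      rw [e1, e2, hK]
      have h2d : (X : ℝ) ^ (2*d) ≠ 0 := by positivity
      field_simp
    -- step 4: combine
    have hcomb : K / X ^ 2 ≤ ‖P.eval z‖ ^ 2 * fsWeight k z := by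
      calc K / X ^ 2 = (c * X ^ d) ^ 2 * ((2 * X ^ 2) ^ (d + 1) : ℝ)⁻¹ := hid.symm
        _ ≤ ‖P.eval z‖ ^ 2 * fsWeight k z := by
            apply mul_le_mul h1 hwfin (by positivity) (by positivity)
    have hfinal : K / (2 * a) ^ 2 ≤ K / X ^ 2 := by
      apply div_le_div_of_nonneg_left hKpos.le (by positivity)
      nlinarith
    linarith

lemma two_mul_half (t : ℝ) (n : ℕ) : 2 * (t / 2 ^ (n+1)) = t / 2 ^ n := by
  rw [pow_succ]; field_simp

/-- divergence near a genuine pole of p/q -/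
lemma lintegral_pole_top (p q : Polynomial ℂ) (k : ℤ) (hp : p ≠ 0) (hq : q ≠ 0)
    (z0 : ℂ) (hlt : rootMultiplicity z0 p < rootMultiplicity z0 q) :
    ∫⁻ z : ℂ, ENNReal.ofReal (‖p.eval z / q.eval z‖ ^ 2 * fsWeight k z) = ⊤ := by
  set l := rootMultiplicity z0 p with hldef
  set m := rootMultiplicity z0 q with hmdef
  set p1 := p /ₘ (X - C z0) ^ l with hp1def
  set q1 := q /ₘ (X - C z0) ^ m with hq1def
  have hfacp : (X - C z0) ^ l * p1 = p := pow_mul_divByMonic_rootMultiplicity_eq p z0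
  have hfacq : (X - C z0) ^ m * q1 = q := pow_mul_divByMonic_rootMultiplicity_eq q z0
  have hp1z : p1.eval z0 ≠ 0 := eval_divByMonic_pow_rootMultiplicity_ne_zero z0 hp
  have hq1z : q1.eval z0 ≠ 0 := eval_divByMonic_pow_rootMultiplicity_ne_zero z0 hq
  set A0 := ‖p1.eval z0‖ with hA0
  set B0 := ‖q1.eval z0‖ with hB0
  have hA0pos : 0 < A0 := norm_pos_iff.mpr hp1z
  have hB0pos : 0 < B0 := norm_pos_iff.mpr hq1z
  -- continuity
  have hcp : ContinuousAt (fun x => p1.eval x) z0 := (Polynomial.continuous p1).continuousAt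
  have hcq : ContinuousAt (fun x => q1.eval x) z0 := (Polynomial.continuous q1).continuousAt
  obtain ⟨δ1, hδ1, hδ1p⟩ := Metric.continuousAt_iff.mp hcp (A0/2) (by positivity)
  obtain ⟨δ2, hδ2, hδ2p⟩ := Metric.continuousAt_iff.mp hcq B0 hB0pos
  obtain ⟨w0, hw0, hw0p⟩ := fsWeight_lower k (‖z0‖ + 1)
  set δ := min (min δ1 δ2) 1 with hδdef
  have hδpos : 0 < δ := by
    apply lt_min (lt_min hδ1 hδ2) one_pos
  set c1 := A0 / 2 with hc1
  set c2 := 2 * B0 with hc2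
  set K := (c1 / c2) ^ 2 * w0 with hKdef
  have hKpos : 0 < K := by positivity
  apply lintegral_annuli_top _ z0 hKpos (fun n => δ / 2 ^ (n+1))
    (fun n => by positivity)
  · intro m' n hmn
    right
    rw [two_mul_half]
    exact div_le_div_of_nonneg_left hδpos.le (by positivity)
      (pow_le_pow_right₀ one_le_two (by omega))
  · intro n z hz
    obtain ⟨hz1, hz2⟩ := hz
    rw [mem_ball] at hz1
    rw [mem_closedBall, not_le] at hz2
    set a : ℝ := δ / 2 ^ (n+1) with ha
    have hapos : (0:ℝ) < a := by positivity
    set Xd := ‖z - z0‖ with hXd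
    have hdisteq : dist z z0 = Xd := Complex.dist_eq z z0
    rw [hdisteq] at hz1 hz2
    have hX0 : 0 < Xd := lt_trans hapos hz2
    have h2aδ : 2 * a ≤ δ := by
      rw [ha, two_mul_half]
      exact div_le_self hδpos.le (one_le_pow₀ one_le_two)
    have hXδ : Xd < δ := lt_of_lt_of_le hz1 h2aδ
    have hX1 : Xd ≤ 1 := le_trans hXδ.le (min_le_right _ _)
    have hXδ1 : Xd < δ1 := lt_of_lt_of_le hXδ (le_trans (min_le_left _ _) (min_le_left _ _))
    have hXδ2 : Xd < δ2 := lt_of_lt_of_le hXδ (le_trans (min_le_left _ _) (min_le_right _ _))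
    -- lower bound for |p1|
    have hdA := hδ1p (show dist z z0 < δ1 by rw [hdisteq]; exact hXδ1)
    rw [Complex.dist_eq] at hdA
    have habsA := abs_norm_sub_norm_le (p1.eval z) (p1.eval z0)
    rw [abs_le] at habsA
    have hA : c1 ≤ ‖p1.eval z‖ := by
      rw [hc1]
      have := habsA.1
      linarith
    -- upper bound for |q1|, and positivity
    have hdB := hδ2p (show dist z z0 < δ2 by rw [hdisteq]; exact hXδ2)
    rw [Complex.dist_eq] at hdB
    have habsB := abs_norm_sub_norm_le (q1.eval z) (q1.eval z0)
    rw [abs_le] at habsB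
    have hB : ‖q1.eval z‖ ≤ c2 := by
      rw [hc2]
      have := habsB.2
      linarith
    have hBpos : 0 < ‖q1.eval z‖ := by
      have := habsB.1
      linarith
    -- weight lower bound
    have hzabs : ‖z‖ ≤ ‖z0‖ + 1 := by
      have h := norm_add_le z0 (z - z0)
      rw [show z0 + (z - z0) = z from by ring] at h
      rw [← hXd] at h
      linarith
    have hw : w0 ≤ fsWeight k z := hw0p z hzabs
    -- factorizations
    have hpe : ‖p.eval z‖ = Xd ^ l * ‖p1.eval z‖ := by
      conv_lhs => rw [← hfacp]
      rw [eval_mul, eval_pow, eval_sub, eval_X, eval_C, norm_mul, norm_pow]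
    have hqe : ‖q.eval z‖ = Xd ^ m * ‖q1.eval z‖ := by
      conv_lhs => rw [← hfacq]
      rw [eval_mul, eval_pow, eval_sub, eval_X, eval_C, norm_mul, norm_pow]
    -- key ratio estimate
    have hkey : c1 / (Xd * c2) ≤ ‖p.eval z / q.eval z‖ := by
      rw [norm_div, hpe, hqe]
      have hmj : m = l + ((m - l - 1) + 1) := by omega
      have hsplit : Xd ^ m = Xd ^ l * Xd ^ ((m - l - 1)+1) := by
        conv_lhs => rw [hmj]
        rw [pow_add]
      rw [hsplit]
      have hcan : Xd ^ l * ‖p1.eval z‖ /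
          (Xd ^ l * Xd ^ ((m - l - 1)+1) * ‖q1.eval z‖)
          = ‖p1.eval z‖ / (Xd ^ ((m - l - 1)+1) * ‖q1.eval z‖) := by
        rw [mul_assoc]
        exact mul_div_mul_left _ _ (by positivity)
      rw [hcan]
      have hdenom : Xd ^ ((m - l - 1)+1) * ‖q1.eval z‖ ≤ Xd * c2 := by
        have h1 : Xd ^ ((m - l - 1)+1) ≤ Xd := by
          calc Xd ^ ((m - l - 1)+1) ≤ Xd ^ (1:ℕ) :=
                pow_le_pow_of_le_one hX0.le hX1 (by omega)
            _ = Xd := pow_one Xd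
        exact mul_le_mul h1 hB hBpos.le hX0.le
      exact div_le_div₀ (norm_nonneg _) hA
        (mul_pos (pow_pos hX0 _) hBpos) hdenom
    -- conclude
    clear_value A0 B0 δ c1 c2 K a Xd
    apply ENNReal.ofReal_le_ofReal
    have hc2pos : 0 < c2 := by rw [hc2]; linarith
    have hc1pos : 0 < c1 := by rw [hc1]; linarith
    calc K / (2*a)^2 ≤ K / Xd^2 := by
          apply div_le_div_of_nonneg_left hKpos.le (by positivity)
          nlinarith
      _ = (c1/(Xd*c2))^2 * w0 := by
          rw [hKdef]
          field_simp
      _ ≤ ‖p.eval z / q.eval z‖ ^ 2 * fsWeight k z := by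
          apply mul_le_mul (pow_le_pow_left₀ (by positivity) hkey 2) hw hw0.le
            (by positivity)

/-- Case I of the proof of the main theorem: if the rational function `f = p/q`
(with `q` nonvanishing on the domain `D`) is square integrable over `D` for the
Fubini–Study weight `w_k` but is not a polynomial of degree at most `k`
(no `P` with `deg P ≤ k` and `p = P·q`), then the complement `ℂ \ D` has positive
Lebesgue measure. -/
theorem complement_pos_measure_of_nonextendable_rational (D : Set ℂ) (hDopen : IsOpen D)
    (hDconn : IsConnected D) (k : ℤ)
    (p q : Polynomial ℂ) (hq : ∀ z ∈ D, q.eval z ≠ 0)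
    (f : ℂ → ℂ) (hfeq : ∀ z ∈ D, f z = p.eval z / q.eval z)
    (hL2 : (∫⁻ z in D, ENNReal.ofReal (‖f z‖ ^ 2 * fsWeight k z)) < ⊤)
    (hnp : ¬ ∃ P : Polynomial ℂ, (∀ n : ℕ, k < (n : ℤ) → P.coeff n = 0) ∧ p = P * q) :
    0 < volume Dᶜ := by
  by_contra hpos
  push_neg at hpos
  have h0 : volume Dᶜ = 0 := le_antisymm hpos zero_le
  obtain ⟨z1, hz1⟩ := hDconn.nonempty
  have hqne : q ≠ 0 := fun h => hq z1 hz1 (by rw [h]; simp)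
  set g : ℂ → ℝ≥0∞ :=
    fun z => ENNReal.ofReal (‖p.eval z / q.eval z‖ ^ 2 * fsWeight k z) with hg
  have hDm : MeasurableSet D := hDopen.measurableSet
  have H1 : ∫⁻ z in D, g z < ⊤ := by
    have heq : ∫⁻ z in D, ENNReal.ofReal (‖f z‖ ^ 2 * fsWeight k z) = ∫⁻ z in D, g z :=
      setLIntegral_congr_fun hDm (fun z hz => by simp only [hg, hfeq z hz])
    rw [← heq]
    exact hL2
  have H2 : ∫⁻ z, g z < ⊤ := by
    calc ∫⁻ z, g z = (∫⁻ z in D, g z) + ∫⁻ z in Dᶜ, g z := (lintegral_add_compl g hDm).symm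
      _ = ∫⁻ z in D, g z := by rw [setLIntegral_measure_zero _ _ h0, add_zero]
      _ < ⊤ := H1
  have Htop : ∫⁻ z, g z = ⊤ := by
    by_cases hdvd : q ∣ p
    · obtain ⟨P, hP⟩ := hdvd
      have hPbad : ∃ n : ℕ, k < (n : ℤ) ∧ P.coeff n ≠ 0 := by
        by_contra hc
        push_neg at hc
        exact hnp ⟨P, hc, by rw [hP, mul_comm]⟩
      obtain ⟨n0, hn0k, hn0⟩ := hPbad
      have hPne : P ≠ 0 := fun h => hn0 (by rw [h]; simp)
      have hdeg : k + 1 ≤ (P.natDegree : ℤ) := by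
        have h1 := Polynomial.le_natDegree_of_ne_zero hn0
        have h2 : (n0 : ℤ) ≤ (P.natDegree : ℤ) := by exact_mod_cast h1
        omega
      have hroots0 : volume {z : ℂ | q.eval z = 0} = 0 :=
        (Polynomial.finite_setOf_isRoot hqne).measure_zero volume
      have hne : ∀ᵐ z : ℂ, q.eval z ≠ 0 := by
        rw [ae_iff]
        convert hroots0 using 2
        ext z
        simp [Polynomial.IsRoot]
      have hae : g =ᵐ[volume]
          fun z => ENNReal.ofReal (‖P.eval z‖ ^ 2 * fsWeight k z) := by
        filter_upwards [hne] with z hz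
        rw [hg]
        simp only [hP, Polynomial.eval_mul]
        rw [mul_comm (q.eval z) (P.eval z), mul_div_assoc, div_self hz, mul_one]
      rw [lintegral_congr_ae hae]
      exact lintegral_poly_top P hPne k hdeg
    · have hpne : p ≠ 0 := fun h => hdvd (h ▸ dvd_zero q)
      have hsplits : q.Splits := IsAlgClosed.splits q
      have hroots : ¬ q.roots ≤ p.roots := fun h =>
        hdvd ((Polynomial.Splits.dvd_iff_roots_le_roots hsplits hqne hpne).mpr h)
      have hex : ∃ z0, p.roots.count z0 < q.roots.count z0 := by
        by_contra hc
        push_neg at hc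
        exact hroots (Multiset.le_iff_count.mpr hc)
      obtain ⟨z0, hz0⟩ := hex
      rw [Polynomial.count_roots, Polynomial.count_roots] at hz0
      have := lintegral_pole_top p q k hpne hqne z0 hz0
      rw [hg]
      simpa using this
  rw [Htop] at H2
  exact lt_irrefl _ H2
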